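/- For every integer a with a ∈ {4, 5, 6} or a ≥ 8, the number of positive integers not representable by a, a+4, a+5, a+6 equals (a²+12a+48)/12 if a ≡ 0 (mod 6), (a²+12a+35)/12 if a ≡ 1 or 5 (mod 6), (a²+12a+32)/12 if a ≡ 2 or 4 (mod 6), and (a²+12a+27)/12 if a ≡ 3 (mod 6). -/

import Mathlib

def Efn (t : ℕ) : Prop := t = 1 ∨ t = 2 ∨ t = 3 ∨ t = 7

instance (t : ℕ) : Decidable (Efn t) := by unfold Efn; infer_instance

def Dfn (a q r : ℕ) : Prop :=
  (¬ Efn r ∧ r ≤ 6*q) ∨ (¬ Efn (r+a) ∧ r+a+6 ≤ 6*q) ∨ (¬ Efn (r+2*a) ∧ r+2*a+12 ≤ 6*q)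

def gapPred (a q r : ℕ) : Prop := (0 < q ∨ 0 < r) ∧ ¬ Dfn a q r

instance (a q r : ℕ) : Decidable (gapPred a q r) := by
  unfold gapPred Dfn Efn; infer_instance

def gapFinset (a : ℕ) : Finset ℕ :=
  ((Finset.range (a+3) ×ˢ Finset.range a).filter (fun p => gapPred a p.1 p.2)).image
    (fun p => a*p.1 + p.2)

lemma rep456 : ∀ t : ℕ, ¬ Efn t → ∃ x y z : ℕ, 4*x+5*y+6*z = t ∧ 6*(x+y+z) ≤ t+5 := by
  intro t
  induction t using Nat.strong_induction_on with
  | _ t ih =>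
    intro ht
    unfold Efn at ht
    by_cases h16 : t < 16
    · interval_cases t <;>
        first
          | (exfalso; omega)
          | exact ⟨0,0,0, by omega⟩
          | exact ⟨1,0,0, by omega⟩
          | exact ⟨0,1,0, by omega⟩
          | exact ⟨0,0,1, by omega⟩
          | exact ⟨2,0,0, by omega⟩
          | exact ⟨1,1,0, by omega⟩
          | exact ⟨0,2,0, by omega⟩
          | exact ⟨0,1,1, by omega⟩
          | exact ⟨0,0,2, by omega⟩
          | exact ⟨2,1,0, by omega⟩
          | exact ⟨1,1,1, by omega⟩
          | exact ⟨1,2,0, by omega⟩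
    · obtain ⟨x, y, z, h1, h2⟩ := ih (t-6) (by omega) (by unfold Efn; omega)
      exact ⟨x, y, z+1, by omega, by omega⟩

lemma char1 (a n : ℕ) :
    (∃ w x y z : ℕ, n = a*w + (a+4)*x + (a+5)*y + (a+6)*z) ↔
    (∃ m t : ℕ, n = a*m + t ∧ t ≤ 6*m ∧ ¬ Efn t) := by
  constructor
  · rintro ⟨w, x, y, z, hn⟩
    refine ⟨w+x+y+z, 4*x+5*y+6*z, ?_, by omega, by unfold Efn; omega⟩
    have key : a*(w+x+y+z) + (4*x+5*y+6*z)
        = a*w + (a+4)*x + (a+5)*y + (a+6)*z := by ring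
    omega
  · rintro ⟨m, t, hn, ht, hE⟩
    obtain ⟨x, y, z, h1, h2⟩ := rep456 t hE
    have hs : x + y + z ≤ m := by omega
    refine ⟨m - (x+y+z), x, y, z, ?_⟩
    have hm : m = (m - (x+y+z)) + (x+y+z) := by omega
    have key : a*((m - (x+y+z))+(x+y+z)) + (4*x+5*y+6*z)
        = a*(m-(x+y+z)) + (a+4)*x + (a+5)*y + (a+6)*z := by ring
    rw [hm] at hn
    omega

lemma char_all (a n : ℕ) (ha : 4 ≤ a) :
    (∃ w x y z : ℕ, n = a*w + (a+4)*x + (a+5)*y + (a+6)*z) ↔ Dfn a (n/a) (n%a) := by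
  rw [char1]
  have hqr : a * (n / a) + n % a = n := Nat.div_add_mod n a
  have hrlt : n % a < a := Nat.mod_lt _ (by omega)
  constructor
  · rintro ⟨m, t, hn, ht, hE⟩
    have hm : m ≤ n / a := by
      rw [Nat.le_div_iff_mul_le (by omega : 0 < a)]
      have : m * a = a * m := by ring
      omega
    obtain ⟨k, hq⟩ : ∃ k, n / a = m + k := ⟨n / a - m, by omega⟩
    unfold Dfn Efn at *
    rcases k with _ | _ | k
    · have hmul : a * (n / a) = a * m := by rw [hq]; ring
      left; omega
    · have hmul : a * (n / a) = a * m + a := by rw [hq]; ring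
      right; left; omega
    · have hmul : a * (n / a) = a * m + a * (k + 2) := by rw [hq]; ring
      have h2a : a * 2 ≤ a * (k + 2) := Nat.mul_le_mul_left a (by omega)
      right; right; omega
  · intro hD
    unfold Dfn Efn at hD
    rcases hD with ⟨hE, hle⟩ | ⟨hE, hle⟩ | ⟨hE, hle⟩
    · exact ⟨n / a, n % a, by omega, hle, by unfold Efn; omega⟩
    · refine ⟨n / a - 1, n % a + a, ?_, by omega, by unfold Efn; omega⟩
      have hq : 2 ≤ n / a := by omega
      have hmul : a * (n / a - 1) + a * 1 = a * (n / a) := by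
        rw [← Nat.mul_add]; congr 1; omega
      omega
    · refine ⟨n / a - 2, n % a + 2*a, ?_, by omega, by unfold Efn; omega⟩
      have hq : 4 ≤ n / a := by omega
      have hmul : a * (n / a - 2) + a * 2 = a * (n / a) := by
        rw [← Nat.mul_add]; congr 1; omega
      omega

lemma setEq (a : ℕ) (ha : 4 ≤ a) :
    {n : ℕ | 0 < n ∧ ¬ ∃ w x y z : ℕ, n = a * w + (a + 4) * x + (a + 5) * y + (a + 6) * z}
      = ↑(gapFinset a) := by
  ext n
  simp only [Set.mem_setOf_eq, gapFinset, Finset.coe_image, Set.mem_image, Finset.mem_coe,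
    Finset.mem_filter, Finset.mem_product, Finset.mem_range]
  constructor
  · rintro ⟨hn, hrep⟩
    rw [char_all a n ha] at hrep
    have hqr : a * (n / a) + n % a = n := Nat.div_add_mod n a
    have hrlt : n % a < a := Nat.mod_lt _ (by omega)
    have hq0 : 0 < n / a ∨ 0 < n % a := by
      rcases Nat.eq_zero_or_pos (n % a) with h2 | h2
      · rcases Nat.eq_zero_or_pos (n / a) with h1 | h1
        · exfalso; rw [h1, h2, Nat.mul_zero, Nat.add_zero] at hqr; omega
        · exact Or.inl h1
      · exact Or.inr h2
    refine ⟨(n/a, n%a), ⟨⟨?_, hrlt⟩, ⟨hq0, hrep⟩⟩, hqr⟩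
    unfold Dfn Efn at hrep; omega
  · rintro ⟨⟨q, r⟩, ⟨⟨hq3, hra⟩, hP⟩, hn⟩
    obtain ⟨h0, hD⟩ := hP
    simp only at h0 hD hn
    have hnq : n / a = q := by
      rw [← hn, Nat.mul_add_div (by omega : 0 < a), Nat.div_eq_of_lt hra, add_zero]
    have hnr : n % a = r := by
      rw [← hn, Nat.mul_add_mod, Nat.mod_eq_of_lt hra]
    constructor
    · rcases h0 with h0 | h0
      · have : a * 1 ≤ a * q := Nat.mul_le_mul_left a h0
        omega
      · omega
    · rw [char_all a n ha, hnq, hnr]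
      exact hD

lemma cardLem (a : ℕ) (ha : 8 ≤ a) :
    (gapFinset a).card + 5 = (∑ r ∈ Finset.range a, (r+5)/6)
      + ((a+12)/6 + (a+13)/6 + (a+14)/6 + (a+18)/6) := by
  unfold gapFinset
  rw [Finset.card_image_of_injOn ?inj]
  case inj =>
    rintro ⟨q, r⟩ hp ⟨q', r'⟩ hp' h
    simp only [Finset.coe_filter, Set.mem_setOf_eq, Finset.mem_product, Finset.mem_range] at hp hp'
    simp only at h
    have h1 : (a*q+r)/a = q := by
      rw [Nat.mul_add_div (by omega : 0 < a), Nat.div_eq_of_lt hp.1.2, add_zero]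
    have h2 : (a*q'+r')/a = q' := by
      rw [Nat.mul_add_div (by omega : 0 < a), Nat.div_eq_of_lt hp'.1.2, add_zero]
    have hq : q = q' := by rw [← h1, ← h2, h]
    have hr : r = r' := by
      rw [hq] at h; omega
    simp [hq, hr]
  rw [Finset.card_filter, Finset.sum_product, Finset.sum_comm]
  have inner : ∀ r ∈ Finset.range a,
      (∑ q ∈ Finset.range (a+3), if gapPred a q r then 1 else 0)
        = (if Efn r then (r+a+11)/6 else (r+5)/6) := by
    intro r hr
    rw [Finset.mem_range] at hr
    rw [← Finset.card_filter]
    have hfil : Finset.filter (fun q => gapPred a q r) (Finset.range (a+3))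
        = Finset.range (if Efn r then (r+a+11)/6 else (r+5)/6) := by
      ext q
      simp only [Finset.mem_filter, Finset.mem_range]
      unfold gapPred Dfn Efn
      split_ifs with hE
      · unfold Efn at hE; erw [if_pos hE]; omega
      · unfold Efn at hE; erw [if_neg hE]; omega
    rw [hfil, Finset.card_range]
  rw [Finset.sum_congr rfl inner, Finset.sum_ite]
  have hfE : Finset.filter (fun r => Efn r) (Finset.range a) = {1, 2, 3, 7} := by
    ext r
    simp only [Finset.mem_filter, Finset.mem_range, Finset.mem_insert, Finset.mem_singleton]
    unfold Efn; omega
  have hsplit := Finset.sum_filter_add_sum_filter_not (Finset.range a) (fun r => Efn r)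
    (fun r => (r+5)/6)
  rw [hfE] at *
  have c1 : ∑ r ∈ ({1, 2, 3, 7} : Finset ℕ), (r+5)/6 = 5 := by decide
  have c2 : ∑ r ∈ ({1, 2, 3, 7} : Finset ℕ), (r+a+11)/6
      = (a+12)/6 + (a+13)/6 + (a+14)/6 + (a+18)/6 := by
    norm_num [Finset.sum_insert, Finset.sum_singleton]
    omega
  omega

def eaux : ℕ → ℕ
  | 0 => 5 | 1 => 0 | 2 => 5 | 3 => 8 | 4 => 9 | _ => 8

lemma Sval (a : ℕ) : 12 * (∑ r ∈ Finset.range a, (r+5)/6) + 5 = a^2 + 4*a + eaux (a % 6) := by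
  induction a with
  | zero => simp [eaux]
  | succ a ih =>
    rw [Finset.sum_range_succ]
    have hsq : (a+1)^2 = a^2 + 2*a + 1 := by ring
    rw [hsq]
    rcases (by omega : a % 6 = 0 ∨ a % 6 = 1 ∨ a % 6 = 2 ∨ a % 6 = 3 ∨ a % 6 = 4 ∨ a % 6 = 5)
      with h | h | h | h | h | h <;>
      rw [h] at ih <;>
      [ (have h' : (a+1) % 6 = 1 := by omega);
        (have h' : (a+1) % 6 = 2 := by omega);
        (have h' : (a+1) % 6 = 3 := by omega);
        (have h' : (a+1) % 6 = 4 := by omega);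
        (have h' : (a+1) % 6 = 5 := by omega);
        (have h' : (a+1) % 6 = 0 := by omega)] <;>
      rw [h'] <;>
      simp only [eaux] at ih ⊢ <;>
      · generalize a^2 = A at ih ⊢
        omega


theorem stmt19 (a : ℕ) (ha : a = 4 ∨ a = 5 ∨ a = 6 ∨ 8 ≤ a) :
    (a % 6 = 0 → {n : ℕ | 0 < n ∧
        ¬ ∃ w x y z : ℕ, n = a * w + (a + 4) * x + (a + 5) * y + (a + 6) * z}.ncard
        = (a ^ 2 + 12 * a + 48) / 12) ∧
    (a % 6 = 1 ∨ a % 6 = 5 → {n : ℕ | 0 < n ∧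
        ¬ ∃ w x y z : ℕ, n = a * w + (a + 4) * x + (a + 5) * y + (a + 6) * z}.ncard
        = (a ^ 2 + 12 * a + 35) / 12) ∧
    (a % 6 = 2 ∨ a % 6 = 4 → {n : ℕ | 0 < n ∧
        ¬ ∃ w x y z : ℕ, n = a * w + (a + 4) * x + (a + 5) * y + (a + 6) * z}.ncard
        = (a ^ 2 + 12 * a + 32) / 12) ∧
    (a % 6 = 3 → {n : ℕ | 0 < n ∧
        ¬ ∃ w x y z : ℕ, n = a * w + (a + 4) * x + (a + 5) * y + (a + 6) * z}.ncard
        = (a ^ 2 + 12 * a + 27) / 12) := by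
  rcases ha with rfl | rfl | rfl | h8
  · refine ⟨fun h => absurd h (by decide), fun h => absurd h (by decide), fun _ => ?_,
      fun h => absurd h (by decide)⟩
    rw [setEq 4 (by norm_num), Set.ncard_coe_finset]
    decide
  · refine ⟨fun h => absurd h (by decide), fun _ => ?_, fun h => absurd h (by decide),
      fun h => absurd h (by decide)⟩
    rw [setEq 5 (by norm_num), Set.ncard_coe_finset]
    decide
  · refine ⟨fun _ => ?_, fun h => absurd h (by decide), fun h => absurd h (by decide),
      fun h => absurd h (by decide)⟩
    rw [setEq 6 (by norm_num), Set.ncard_coe_finset]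
    decide
  · rw [setEq a (by omega), Set.ncard_coe_finset]
    have hc := cardLem a h8
    have hS := Sval a
    refine ⟨fun h => ?_, fun h => ?_, fun h => ?_, fun h => ?_⟩
    · obtain ⟨k, hk⟩ : ∃ k, a = 6*k := ⟨a/6, by omega⟩
      obtain ⟨K, hK⟩ : ∃ K, a^2 = 12*K := ⟨3*k^2, by rw [hk]; ring⟩
      rw [h] at hS; simp only [eaux] at hS
      rw [hK] at hS ⊢
      omega
    · rcases h with h | h
      · obtain ⟨k, hk⟩ : ∃ k, a = 6*k+1 := ⟨a/6, by omega⟩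
        obtain ⟨K, hK⟩ : ∃ K, a^2 = 12*K+1 := ⟨3*k^2+k, by rw [hk]; ring⟩
        rw [h] at hS; simp only [eaux] at hS
        rw [hK] at hS ⊢
        omega
      · obtain ⟨k, hk⟩ : ∃ k, a = 6*k+5 := ⟨a/6, by omega⟩
        obtain ⟨K, hK⟩ : ∃ K, a^2 = 12*K+1 := ⟨3*k^2+5*k+2, by rw [hk]; ring⟩
        rw [h] at hS; simp only [eaux] at hS
        rw [hK] at hS ⊢
        omega
    · rcases h with h | h
      · obtain ⟨k, hk⟩ : ∃ k, a = 6*k+2 := ⟨a/6, by omega⟩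
        obtain ⟨K, hK⟩ : ∃ K, a^2 = 12*K+4 := ⟨3*k^2+2*k, by rw [hk]; ring⟩
        rw [h] at hS; simp only [eaux] at hS
        rw [hK] at hS ⊢
        omega
      · obtain ⟨k, hk⟩ : ∃ k, a = 6*k+4 := ⟨a/6, by omega⟩
        obtain ⟨K, hK⟩ : ∃ K, a^2 = 12*K+4 := ⟨3*k^2+4*k+1, by rw [hk]; ring⟩
        rw [h] at hS; simp only [eaux] at hS
        rw [hK] at hS ⊢
        omega
    · obtain ⟨k, hk⟩ : ∃ k, a = 6*k+3 := ⟨a/6, by omega⟩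
      obtain ⟨K, hK⟩ : ∃ K, a^2 = 12*K+9 := ⟨3*k^2+3*k, by rw [hk]; ring⟩
      rw [h] at hS; simp only [eaux] at hS
      rw [hK] at hS ⊢
      omega
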